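/- Let E be a finite field and F a subfield with [E : F] = p. Let k ≥ 1 and let β_1, …, β_n ∈ E be distinct with n ≥ p + k. Let i* ∈ {1,…,n} satisfy F(β_{i*}) = E, and let R ⊆ {1,…,n}\{i*} satisfy |R| = p + k − 1 and β_j ∈ F for all j ∈ R. Define h(x) = ∏_{j ∉ R ∪ {i*}} (x − β_j) and v_j = ∏_{t ≠ j} (β_j − β_t)^{−1}. Then for any two polynomials f, g ∈ E[x] of degree at most k − 1: if tr_{E/F}(v_j · h(β_j) · f(β_j)) = tr_{E/F}(v_j · h(β_j) · g(β_j)) for all j ∈ R, then f(β_{i*}) = g(β_{i*}). In other words, the symbol f(β_{i*}) of the [n,k] Reed-Solomon codeword is determined by the |R| = p + k − 1 trace values {tr_{E/F}(v_j h(β_j) f(β_j)) : j ∈ R}, each of which is a single symbol of F. -/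

import Mathlib

open Polynomial Finset

/-- The coefficient of the Lagrange basis polynomial in degree `#s - 1` is the nodal weight. -/
lemma lagrange_basis_coeff {E : Type*} [Field E] {ι : Type*} [DecidableEq ι]
    (s : Finset ι) (β : ι → E) (i : ι) (hi : i ∈ s) :
    (Lagrange.basis s β i).coeff (#s - 1) = Lagrange.nodalWeight s β i := by
  rw [Lagrange.basis_eq_prod_sub_inv_mul_nodal_div hi, ← Lagrange.nodal_erase_eq_nodal_div hi,
    coeff_C_mul]
  have h1 : (Lagrange.nodal (s.erase i) β).natDegree = #s - 1 := by
    rw [Lagrange.natDegree_nodal, card_erase_of_mem hi]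
  rw [← h1, Monic.coeff_natDegree Lagrange.nodal_monic, mul_one]

/-- Key residue-type identity : if `deg P < #s - 1` then the nodal-weighted sum of the
values of `P` at the nodes vanishes. -/
lemma sum_nodalWeight_eval {E : Type*} [Field E] {ι : Type*} [DecidableEq ι]
    (s : Finset ι) (β : ι → E) (hβ : Set.InjOn β s)
    (P : E[X]) (hP : P.degree < ((#s - 1 : ℕ) : WithBot ℕ)) :
    ∑ j ∈ s, Lagrange.nodalWeight s β j * P.eval (β j) = 0 := by
  have h1 : P.degree < (#s : WithBot ℕ) :=
    lt_of_lt_of_le hP (by exact_mod_cast Nat.sub_le _ 1)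
  have h2 := Lagrange.eq_interpolate hβ h1
  have h3 : (Lagrange.interpolate s β fun x => P.eval (β x)).coeff (#s - 1)
      = ∑ j ∈ s, P.eval (β j) * Lagrange.nodalWeight s β j := by
    rw [Lagrange.interpolate_apply, finset_sum_coeff]
    exact sum_congr rfl fun j hj => by rw [coeff_C_mul, lagrange_basis_coeff s β j hj]
  rw [← h2, coeff_eq_zero_of_degree_lt hP] at h3
  simpa [mul_comm] using h3.symm

/-- Let `E` be a finite field, `F` a subfield with `[E : F] = p`, `k ≥ 1`,
`β 1, …, β n ∈ E` distinct with `n ≥ p + k`, `i*` an index with `F(β i*) = E`, and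
`R ⊆ [n] \ {i*}` with `|R| = p + k - 1` and `β j ∈ F` for all `j ∈ R`. With
`h(x) = ∏_{j ∉ R ∪ {i*}} (x - β j)` and `v j = ∏_{t ≠ j} (β j - β t)⁻¹`, for any two
polynomials `f, g ∈ E[x]` of degree at most `k - 1`: if
`tr_{E/F}(v j · h(β j) · f(β j)) = tr_{E/F}(v j · h(β j) · g(β j))` for all `j ∈ R`,
then `f(β i*) = g(β i*)`. -/
theorem symbol_determined_by_traces (F E : Type*) [Field F] [Field E] [Fintype E]
    [Algebra F E] (p k n : ℕ) (hp : Module.finrank F E = p)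
    (hk : 1 ≤ k) (hn : p + k ≤ n)
    (β : Fin n → E) (hβ : Function.Injective β)
    (istar : Fin n) (hgen : IntermediateField.adjoin F {β istar} = ⊤)
    (R : Finset (Fin n)) (histar : istar ∉ R) (hcard : R.card = p + k - 1)
    (hRF : ∀ j ∈ R, β j ∈ (algebraMap F E).range)
    (h : Polynomial E)
    (hh : h = ∏ j ∈ Finset.univ \ insert istar R, (Polynomial.X - Polynomial.C (β j)))
    (v : Fin n → E) (hv : ∀ j, v j = ∏ t ∈ Finset.univ.erase j, (β j - β t)⁻¹)
    (f g : Polynomial E) (hf : f.degree ≤ (k - 1 : ℕ)) (hg : g.degree ≤ (k - 1 : ℕ))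
    (htr : ∀ j ∈ R,
      Algebra.trace F E (v j * h.eval (β j) * f.eval (β j)) =
        Algebra.trace F E (v j * h.eval (β j) * g.eval (β j))) :
    f.eval (β istar) = g.eval (β istar) := by
  classical
  haveI : Finite F := Finite.of_injective (algebraMap F E) (algebraMap F E).injective
  haveI : FiniteDimensional F E := Module.Finite.of_finite
  have hp1 : 1 ≤ p := hp ▸ Module.finrank_pos
  set d : Polynomial E := f - g with hd
  have hdeg : d.degree ≤ ((k - 1 : ℕ) : WithBot ℕ) :=
    le_trans (degree_sub_le f g) (max_le hf hg)
  have htr0 : ∀ j ∈ R, Algebra.trace F E (v j * h.eval (β j) * d.eval (β j)) = 0 := by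
    intro j hj
    rw [hd, eval_sub, mul_sub, map_sub, htr j hj, sub_self]
  -- cardinalities
  have hcard2 : (insert istar R).card = p + k := by
    rw [card_insert_of_notMem histar, hcard]; omega
  have hcompl : (Finset.univ \ insert istar R).card = n - (p + k) := by
    rw [card_sdiff_of_subset (subset_univ _), card_univ, Fintype.card_fin, hcard2]
  -- facts about h
  have hmonic : h.Monic := hh ▸ monic_prod_of_monic _ _ fun j _ => monic_X_sub_C _
  have hdegh : h.natDegree = n - (p + k) := by
    rw [hh, natDegree_prod_of_monic _ _ fun j _ => monic_X_sub_C _]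
    simp [natDegree_X_sub_C, hcompl]
  have hhis : h.eval (β istar) ≠ 0 := by
    rw [hh, eval_prod]
    refine prod_ne_zero_iff.mpr fun j hj => ?_
    simp only [eval_sub, eval_X, eval_C, sub_ne_zero]
    intro hEq
    cases hβ hEq
    exact (mem_sdiff.mp hj).2 (mem_insert_self _ _)
  have hvis : v istar ≠ 0 := by
    rw [hv]
    refine prod_ne_zero_iff.mpr fun t ht => inv_ne_zero (sub_ne_zero_of_ne fun hEq => ?_)
    exact (mem_erase.mp ht).1 (hβ hEq).symm
  -- minimal polynomial of β istar has degree p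
  have hint : IsIntegral F (β istar) := IsIntegral.of_finite F _
  have hmindeg : (minpoly F (β istar)).natDegree = p := by
    rw [← IntermediateField.adjoin.finrank hint, hgen, IntermediateField.finrank_top', hp]
  -- every element of E is a value at β istar of a polynomial over F of degree < p
  have hq : ∀ e : E, ∃ q : Polynomial F,
      q.degree < (p : WithBot ℕ) ∧ Polynomial.aeval (β istar) q = e := by
    intro e
    have he : e ∈ Algebra.adjoin F ({β istar} : Set E) := by
      have h1 := IntermediateField.adjoin_simple_toSubalgebra_of_isAlgebraic hint.isAlgebraic
      rw [← h1, hgen]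
      exact trivial
    rw [Algebra.adjoin_singleton_eq_range_aeval] at he
    obtain ⟨q0, hq0⟩ := he
    refine ⟨q0 %ₘ minpoly F (β istar), ?_, ?_⟩
    · have := degree_modByMonic_lt q0 (minpoly.monic hint)
      have hdm : (minpoly F (β istar)).degree = (p : WithBot ℕ) := by
        rw [degree_eq_natDegree (minpoly.ne_zero hint), hmindeg]
      rwa [hdm] at this
    · rw [aeval_modByMonic_eq_self_of_root (minpoly.aeval F _)]
      exact hq0
  -- main claim: trace (w * e) = 0 for all e, where w is as below
  set w : E := v istar * h.eval (β istar) * d.eval (β istar) with hw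
  have hkey : ∀ e : E, Algebra.trace F E (w * e) = 0 := by
    intro e
    obtain ⟨q, hqdeg, hqe⟩ := hq e
    set Q : Polynomial E := q.map (algebraMap F E) with hQ
    have hQdeg : Q.degree ≤ ((p - 1 : ℕ) : WithBot ℕ) := by
      refine le_trans (degree_map_le) ?_
      rcases hdq : q.degree with _ | m
      · exact bot_le
      · rw [hdq] at hqdeg
        exact WithBot.coe_le_coe.mpr (Nat.le_sub_one_of_lt (WithBot.coe_lt_coe.mp hqdeg))
    -- degree bound for h * d * Q
    have hdegP : (h * d * Q).degree < ((n - 1 : ℕ) : WithBot ℕ) := by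
      have h1 : (h * d * Q).degree ≤ h.degree + d.degree + Q.degree :=
        le_trans (degree_mul_le _ _) (add_le_add (degree_mul_le _ _) le_rfl)
      have h2 : h.degree = ((n - (p + k) : ℕ) : WithBot ℕ) := by
        rw [degree_eq_natDegree hmonic.ne_zero, hdegh]
      calc (h * d * Q).degree
          ≤ ((n - (p + k) : ℕ) : WithBot ℕ) + ((k - 1 : ℕ) : WithBot ℕ)
            + ((p - 1 : ℕ) : WithBot ℕ) := by
            refine le_trans h1 (add_le_add (add_le_add ?_ hdeg) hQdeg)
            rw [h2]
        _ = ((n - 2 : ℕ) : WithBot ℕ) := by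
            rw [← Nat.cast_add, ← Nat.cast_add, Nat.cast_inj]; omega
        _ < ((n - 1 : ℕ) : WithBot ℕ) := by exact_mod_cast (by omega : n - 2 < n - 1)
    -- the residue identity
    have hsum := sum_nodalWeight_eval (univ : Finset (Fin n)) β hβ.injOn (h * d * Q)
      (by simpa [card_univ] using hdegP)
    have hnodal : ∀ j : Fin n, Lagrange.nodalWeight univ β j = v j := fun j => by
      rw [hv]; rfl
    simp only [hnodal] at hsum
    -- terms outside insert istar R vanish since h vanishes there
    have hzero : ∀ j ∈ Finset.univ \ insert istar R,
        v j * (h * d * Q).eval (β j) = 0 := by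
      intro j hj
      have : h.eval (β j) = 0 := by
        rw [hh, eval_prod]
        exact prod_eq_zero hj (by simp)
      rw [eval_mul, eval_mul, this, zero_mul, zero_mul, mul_zero]
    rw [← Finset.sum_sdiff (subset_univ (insert istar R)),
      Finset.sum_eq_zero hzero, zero_add, Finset.sum_insert histar] at hsum
    -- apply trace
    have htrsum := congrArg (Algebra.trace F E) hsum
    rw [map_add, map_sum, map_zero] at htrsum
    have hRzero : ∀ j ∈ R, Algebra.trace F E (v j * (h * d * Q).eval (β j)) = 0 := by
      intro j hj
      obtain ⟨c, hc⟩ := hRF j hj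
      have hQj : Q.eval (β j) = algebraMap F E (q.eval c) := by
        rw [hQ, eval_map, ← hc, eval₂_at_apply]
      have hrw : v j * (h * d * Q).eval (β j)
          = (q.eval c) • (v j * h.eval (β j) * d.eval (β j)) := by
        rw [eval_mul, eval_mul, hQj, Algebra.smul_def]; ring
      rw [hrw, map_smul, htr0 j hj, smul_zero]
    rw [Finset.sum_eq_zero hRzero, add_zero] at htrsum
    have hrw2 : v istar * (h * d * Q).eval (β istar) = w * e := by
      rw [eval_mul, eval_mul, hw, ← hqe, hQ, aeval_def, ← eval_map]; ring
    rwa [hrw2] at htrsum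
  -- nondegeneracy of the trace form gives w = 0
  have hw0 : w = 0 := by
    refine (traceForm_nondegenerate F E).1 w fun e => ?_
    rw [Algebra.traceForm_apply]
    exact hkey e
  have hd0 : d.eval (β istar) = 0 := by
    rcases mul_eq_zero.mp hw0 with h1 | h1
    · rcases mul_eq_zero.mp h1 with h2 | h2
      · exact absurd h2 hvis
      · exact absurd h2 hhis
    · exact h1
  rw [hd, eval_sub, sub_eq_zero] at hd0
  exact hd0
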